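/- Assume the piecewise linear Lasso homotopy of the perturb-one problem is valid for all t ∈ ℝ (i.e., at every point of change only one coordinate enters or leaves the active set, and Σ̂_J has full rank for every active set J occurring along the path). If max_{1≤i≤n} |x_{i,J}'Σ̂_J^{-1}x_{n+1,J}| < n for every active set J occurring as t varies over the real line, then the Lasso conformal prediction set Ĉ(x_{n+1}) is an interval. -/

import Mathlib

open scoped BigOperators Matrix

noncomputable section

/-- Euclidean inner product on `Fin p → ℝ`. -/
def dotp {p : ℕ} (a b : Fin p → ℝ) : ℝ := ∑ j, a j * b j

/-- The Lasso objective `F(β) = (1/2)∑ᵢ (yᵢ − xᵢ'β)² + λ‖β‖₁`. -/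
def lassoObj {n p : ℕ} (x : Fin n → Fin p → ℝ) (y : Fin n → ℝ) (lam : ℝ)
    (β : Fin p → ℝ) : ℝ :=
  (1 / 2) * ∑ i, (y i - dotp (x i) β) ^ 2 + lam * ∑ j, |β j|

/-- The augmented Lasso objective with `(x_{n+1}, ynew)` added as the `(n+1)`-th sample. -/
def augObj {n p : ℕ} (x : Fin n → Fin p → ℝ) (y : Fin n → ℝ) (xnew : Fin p → ℝ)
    (lam : ℝ) (ynew : ℝ) (β : Fin p → ℝ) : ℝ :=
  lassoObj x y lam β + (1 / 2) * (ynew - dotp xnew β) ^ 2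

/-- The submatrix `Σ̂_J` of the sample covariance matrix `Σ̂ = n⁻¹∑ᵢ xᵢxᵢ'`. -/
def gramJ {n p : ℕ} (x : Fin n → Fin p → ℝ) (J : Finset (Fin p)) : Matrix ↥J ↥J ℝ :=
  Matrix.of fun a b => (1 / (n : ℝ)) * ∑ i, x i a.1 * x i b.1

/-- The subvector `u_J` of `u` with coordinates in `J`. -/
def subv {p : ℕ} (u : Fin p → ℝ) (J : Finset (Fin p)) : ↥J → ℝ := fun a => u a.1

/-- `Σ̂_J⁻¹ x_{n+1,J}`. -/
def invPart {n p : ℕ} (x : Fin n → Fin p → ℝ) (J : Finset (Fin p)) (xnew : Fin p → ℝ) :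
    ↥J → ℝ :=
  (gramJ x J)⁻¹ *ᵥ subv xnew J

/-- The denominator `1 + n⁻¹ x_{n+1,J}'Σ̂_J⁻¹x_{n+1,J}`. -/
def denomC {n p : ℕ} (x : Fin n → Fin p → ℝ) (J : Finset (Fin p)) (xnew : Fin p → ℝ) : ℝ :=
  1 + (1 / (n : ℝ)) * (subv xnew J ⬝ᵥ invPart x J xnew)

/-- The slope vector `η = n⁻¹Σ̂_J⁻¹x_{n+1,J} / (1 + n⁻¹x_{n+1,J}'Σ̂_J⁻¹x_{n+1,J})`,
extended by `0` off `J`. -/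
def etaV {n p : ℕ} (x : Fin n → Fin p → ℝ) (J : Finset (Fin p)) (xnew : Fin p → ℝ) :
    Fin p → ℝ := fun j =>
  if h : j ∈ J then (1 / (n : ℝ)) * invPart x J xnew ⟨j, h⟩ / denomC x J xnew else 0

/-- The dual slope vector
`γ = (x_{n+1,J^c} − Σ̂_{J^c,J}Σ̂_J⁻¹x_{n+1,J}) / (1 + n⁻¹x_{n+1,J}'Σ̂_J⁻¹x_{n+1,J})`
(only its coordinates off `J` are used). -/
def gammaV {n p : ℕ} (x : Fin n → Fin p → ℝ) (J : Finset (Fin p)) (xnew : Fin p → ℝ) :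
    Fin p → ℝ := fun j =>
  (xnew j - ∑ a : ↥J, ((1 / (n : ℝ)) * ∑ i, x i j * x i a.1) * invPart x J xnew a) /
    denomC x J xnew

/-- `rpp a b` is `(a/b)₊₊ ∈ EReal`, the ratio `a/b` computed with the conventions
`0/0 = 0`, `z/0 = sign(z)·∞`, and then `(z)₊₊ = z` if `z > 0`, `(z)₊₊ = +∞` if `z ≤ 0`.
(When `b = 0` the result is always `+∞`, matching the conventions.) -/
def rpp (a b : ℝ) : EReal := if b ≠ 0 ∧ 0 < a / b then ((a / b : ℝ) : EReal) else ⊤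

/-- The first point of change
`t₁ = min_{j∈J}(−β̂_j/η_j)₊₊ ∧ min_{j∈J^c}((sign(γ_j)λ − v_j)/γ_j)₊₊`. -/
def tOne {n p : ℕ} (x : Fin n → Fin p → ℝ) (J : Finset (Fin p)) (xnew : Fin p → ℝ)
    (βhat v : Fin p → ℝ) (lam : ℝ) : EReal :=
  (J.inf fun j => rpp (-(βhat j)) (etaV x J xnew j)) ⊓
    (Jᶜ.inf fun j => rpp (Real.sign (gammaV x J xnew j) * lam - v j) (gammaV x J xnew j))

/-- The homotopy solution `β(t)`: `β(t)_J = β̂_J + t·η`, `β(t)_{J^c} = 0`. -/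
def betaT {n p : ℕ} (x : Fin n → Fin p → ℝ) (J : Finset (Fin p)) (xnew : Fin p → ℝ)
    (βhat : Fin p → ℝ) (t : ℝ) : Fin p → ℝ := fun j =>
  if j ∈ J then βhat j + t * etaV x J xnew j else 0

/-- The conformal p-value `p̂_y = 1 − (n+1)⁻¹·#{1 ≤ i ≤ n+1 : |r_i(y)| ≤ |r_{n+1}(y)|}`, where
`r_i(y) = y_i − x_i'β̃(y)` for `i ≤ n` and `r_{n+1}(y) = y − x_{n+1}'β̃(y)`; the `+1` in the
numerator accounts for the index `i = n+1`, which always satisfies `|r_{n+1}| ≤ |r_{n+1}|`. -/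
def pvalConf {n p : ℕ} (x : Fin n → Fin p → ℝ) (y : Fin n → ℝ) (xnew : Fin p → ℝ)
    (βt : ℝ → Fin p → ℝ) (t : ℝ) : ℝ :=
  1 - (((Finset.univ.filter fun i : Fin n =>
        |y i - dotp (x i) (βt t)| ≤ |t - dotp xnew (βt t)|).card + 1 : ℝ)) / (n + 1)


lemma monotone_of_local (h : ℝ → ℝ)
    (Hr : ∀ t₀ : ℝ, ∃ δ : ℝ, 0 < δ ∧ ∀ t ∈ Set.Icc t₀ (t₀ + δ), h t₀ ≤ h t)
    (Hl : ∀ t₀ : ℝ, ∃ δ : ℝ, 0 < δ ∧ ∀ t ∈ Set.Icc (t₀ - δ) t₀, h t ≤ h t₀) :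
    Monotone h := by
  intro a b hab
  rcases eq_or_lt_of_le hab with rfl | hab
  · exact le_rfl
  by_contra hlt
  push_neg at hlt
  set T : Set ℝ := {t | t ∈ Set.Icc a b ∧ h a ≤ h t} with hT
  have hTa : a ∈ T := ⟨⟨le_refl a, hab.le⟩, le_rfl⟩
  have hbdd : BddAbove T := ⟨b, fun t ht => ht.1.2⟩
  set c := sSup T with hc
  have hcI : c ∈ Set.Icc a b := ⟨le_csSup hbdd hTa, csSup_le ⟨a, hTa⟩ fun t ht => ht.1.2⟩
  have hhc : h a ≤ h c := by
    obtain ⟨δ, hδ, hδl⟩ := Hl c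
    obtain ⟨t, htT, hts⟩ := exists_lt_of_lt_csSup ⟨a, hTa⟩ (by linarith : c - δ < c)
    have htc : t ≤ c := le_csSup hbdd htT
    exact le_trans htT.2 (hδl t ⟨by linarith, htc⟩)
  have hcb : c = b := by
    by_contra hne
    have hcb' : c < b := lt_of_le_of_ne hcI.2 hne
    obtain ⟨δ, hδ, hδr⟩ := Hr c
    have h1 : c < min (c + δ) b := lt_min (by linarith) hcb'
    have ht'T : min (c + δ) b ∈ T :=
      ⟨⟨le_trans hcI.1 h1.le, min_le_right _ _⟩,
        le_trans hhc (hδr _ ⟨h1.le, min_le_left _ _⟩)⟩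
    exact absurd (le_csSup hbdd ht'T) (not_le.mpr h1)
  exact absurd (hcb ▸ hhc) (not_le.mpr hlt)
lemma hdot_eta {n p : ℕ} (x : Fin n → Fin p → ℝ) (xnew : Fin p → ℝ)
    (J : Finset (Fin p)) (u : Fin p → ℝ) :
    dotp u (etaV x J xnew)
      = ((1 / (n : ℝ)) * (subv u J ⬝ᵥ invPart x J xnew)) / denomC x J xnew := by
  unfold dotp
  rw [show (∑ j, u j * etaV x J xnew j)
      = ∑ j, (if j ∈ J then u j * etaV x J xnew j else 0) from
    Finset.sum_congr rfl fun j _ => by by_cases h : j ∈ J <;> simp [etaV, h]]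
  rw [Finset.sum_ite_mem, Finset.univ_inter,
    ← Finset.sum_attach J (fun j => u j * etaV x J xnew j)]
  rw [dotProduct]
  rw [Finset.univ_eq_attach, Finset.mul_sum, Finset.sum_div]
  apply Finset.sum_congr rfl
  intro a _
  simp only [etaV, a.2, dif_pos, Subtype.coe_eta, subv]
  ring
lemma hpsd_quad {n p : ℕ} (x : Fin n → Fin p → ℝ) (xnew : Fin p → ℝ)
    (J : Finset (Fin p)) (hJ : IsUnit (gramJ x J)) :
    0 ≤ subv xnew J ⬝ᵥ invPart x J xnew := by
  have hcancel : gramJ x J *ᵥ invPart x J xnew = subv xnew J := by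
    unfold invPart
    rw [Matrix.mulVec_mulVec,
      Matrix.mul_nonsing_inv _ ((Matrix.isUnit_iff_isUnit_det _).mp hJ),
      Matrix.one_mulVec]
  set w := invPart x J xnew with hw
  rw [← hcancel]
  have key : (gramJ x J *ᵥ w) ⬝ᵥ w
      = (1 / (n : ℝ)) * ∑ i, (∑ a : ↥J, x i a.1 * w a) ^ 2 := by
    simp only [dotProduct, Matrix.mulVec, dotProduct, gramJ,
      Matrix.of_apply, Finset.sum_mul, Finset.mul_sum, pow_two]
    refine (Finset.sum_congr rfl fun a _ => Finset.sum_comm).trans ?_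
    refine (Finset.sum_comm).trans ?_
    exact Finset.sum_congr rfl fun i _ => Finset.sum_congr rfl fun a _ =>
      Finset.sum_congr rfl fun b _ => by ring
  rw [key]
  have h1 : (0:ℝ) ≤ 1 / (n : ℝ) := by positivity
  exact mul_nonneg h1 (Finset.sum_nonneg fun i _ => sq_nonneg _)
lemma hslope_nonneg {n p : ℕ} (x : Fin n → Fin p → ℝ) (xnew : Fin p → ℝ)
    (J : Finset (Fin p)) (hJ : IsUnit (gramJ x J))
    (hcross : ∀ i, |subv (x i) J ⬝ᵥ invPart x J xnew| < (n : ℝ))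
    (i : Fin n) (ε : ℝ) (hε : ε = 1 ∨ ε = -1) :
    0 ≤ 1 - dotp xnew (etaV x J xnew) - ε * dotp (x i) (etaV x J xnew) := by
  have hn : (0:ℝ) < n := by exact_mod_cast i.pos
  rw [hdot_eta, hdot_eta]
  set S := subv xnew J ⬝ᵥ invPart x J xnew with hS
  set Si := subv (x i) J ⬝ᵥ invPart x J xnew with hSi
  have hS0 : 0 ≤ S := hpsd_quad x xnew J hJ
  have hCd : denomC x J xnew = 1 + (1 / (n:ℝ)) * S := rfl
  have ha0 : 0 ≤ (1 / (n:ℝ)) * S := by positivity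
  have hCpos : 0 < denomC x J xnew := by rw [hCd]; linarith
  have hq : |(1 / (n:ℝ)) * Si| < 1 := by
    rw [abs_mul, abs_of_pos (by positivity : (0:ℝ) < 1 / (n:ℝ))]
    calc 1 / (n:ℝ) * |Si| < 1 / (n:ℝ) * n := by
          exact mul_lt_mul_of_pos_left (hcross i) (by positivity)
      _ = 1 := by field_simp
  obtain ⟨hq1, hq2⟩ := abs_lt.mp hq
  rcases hε with rfl | rfl
  · have heq : 1 - (1 / (n:ℝ)) * S / denomC x J xnew - 1 * ((1 / (n:ℝ)) * Si / denomC x J xnew)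
        = (1 - (1 / (n:ℝ)) * Si) / denomC x J xnew := by
      rw [hCd]; field_simp; ring
    rw [heq]
    exact div_nonneg (by linarith) hCpos.le
  · have heq : 1 - (1 / (n:ℝ)) * S / denomC x J xnew - (-1) * ((1 / (n:ℝ)) * Si / denomC x J xnew)
        = (1 + (1 / (n:ℝ)) * Si) / denomC x J xnew := by
      rw [hCd]; field_simp; ring
    rw [heq]
    exact div_nonneg (by linarith) hCpos.le

lemma hbeta_diff {n p : ℕ} (x : Fin n → Fin p → ℝ) (xnew : Fin p → ℝ)
    (βt : ℝ → Fin p → ℝ) (J : Finset (Fin p)) (t₀ t : ℝ)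
    (h1 : ∀ j ∉ J, βt t j = 0)
    (h2 : ∀ j ∈ J, βt t j = βt t₀ j + etaV x J xnew j * (t - t₀))
    (h0 : ∀ j ∉ J, βt t₀ j = 0) (u : Fin p → ℝ) :
    dotp u (βt t) = dotp u (βt t₀) + (t - t₀) * dotp u (etaV x J xnew) := by
  unfold dotp
  rw [Finset.mul_sum, ← Finset.sum_add_distrib]
  apply Finset.sum_congr rfl
  intro j _
  by_cases hj : j ∈ J
  · rw [h2 j hj]; ring
  · rw [h1 j hj, h0 j hj]; simp [etaV, hj]

/-- Theorem 2 of the paper: if the piecewise linear perturb-one Lasso homotopy is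
valid for all `t ∈ ℝ` (locally around every `t₀` the solution evolves linearly with slope
`η(J)` for an active set `J` with full-rank `Σ̂_J`), and every active set `J` occurring along
the path satisfies the cross-leverage bound `max_{1≤i≤n} |x_{i,J}'Σ̂_J⁻¹x_{n+1,J}| < n`, then
the Lasso conformal prediction set `Ĉ(x_{n+1}) = {y : p̂_y ≥ α}` is an interval (an
order-connected subset of `ℝ`). -/
theorem lasso_conformal_set_interval {n p : ℕ} (x : Fin n → Fin p → ℝ) (y : Fin n → ℝ)
    (xnew : Fin p → ℝ) (lam : ℝ) (hlam : 0 < lam) (α : ℝ) (hα : α ∈ Set.Ioo (0 : ℝ) 1)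
    (βt : ℝ → Fin p → ℝ)
    (hβt : ∀ t : ℝ, ∀ β, augObj x y xnew lam t (βt t) ≤ augObj x y xnew lam t β)
    (hpath_right : ∀ t₀ : ℝ, ∃ δ : ℝ, 0 < δ ∧ ∃ J : Finset (Fin p),
      IsUnit (gramJ x J) ∧
      (∀ i, |subv (x i) J ⬝ᵥ invPart x J xnew| < (n : ℝ)) ∧
      ∀ t ∈ Set.Icc t₀ (t₀ + δ),
        (∀ j ∉ J, βt t j = 0) ∧
        (∀ j ∈ J, βt t j = βt t₀ j + etaV x J xnew j * (t - t₀)))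
    (hpath_left : ∀ t₀ : ℝ, ∃ δ : ℝ, 0 < δ ∧ ∃ J : Finset (Fin p),
      IsUnit (gramJ x J) ∧
      (∀ i, |subv (x i) J ⬝ᵥ invPart x J xnew| < (n : ℝ)) ∧
      ∀ t ∈ Set.Icc (t₀ - δ) t₀,
        (∀ j ∉ J, βt t j = 0) ∧
        (∀ j ∈ J, βt t j = βt t₀ j + etaV x J xnew j * (t - t₀))) :
    {t : ℝ | α ≤ pvalConf x y xnew βt t}.OrdConnected := by
  have hFmono : ∀ ε : ℝ, ε = 1 ∨ ε = -1 → ∀ i : Fin n,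
      Monotone (fun t => (t - dotp xnew (βt t)) + ε * (y i - dotp (x i) (βt t))) := by
    intro ε hε i
    apply monotone_of_local
    · intro t₀
      obtain ⟨δ, hδ, J, hJ, hcross, hlin⟩ := hpath_right t₀
      refine ⟨δ, hδ, fun t ht => ?_⟩
      have h0 := hlin t₀ ⟨le_rfl, by linarith⟩
      have h1 := hlin t ht
      have hdx := hbeta_diff x xnew βt J t₀ t h1.1 h1.2 h0.1 xnew
      have hdi := hbeta_diff x xnew βt J t₀ t h1.1 h1.2 h0.1 (x i)
      have hs := hslope_nonneg x xnew J hJ hcross i ε hε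
      have ht0 : t₀ ≤ t := ht.1
      rw [hdx, hdi]
      nlinarith [mul_nonneg (sub_nonneg.mpr ht0) hs]
    · intro t₀
      obtain ⟨δ, hδ, J, hJ, hcross, hlin⟩ := hpath_left t₀
      refine ⟨δ, hδ, fun t ht => ?_⟩
      have h0 := hlin t₀ ⟨by linarith, le_rfl⟩
      have h1 := hlin t ht
      have hdx := hbeta_diff x xnew βt J t₀ t h1.1 h1.2 h0.1 xnew
      have hdi := hbeta_diff x xnew βt J t₀ t h1.1 h1.2 h0.1 (x i)
      have hs := hslope_nonneg x xnew J hJ hcross i ε hε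
      have ht0 : t ≤ t₀ := ht.2
      rw [hdx, hdi]
      nlinarith [mul_nonneg (sub_nonneg.mpr ht0) hs]
  constructor
  intro t1 ht1 t3 ht3 t2 ht2
  simp only [Set.mem_setOf_eq] at ht1 ht3 ⊢
  rcases le_total (t2 - dotp xnew (βt t2)) 0 with hsign | hsign
  · -- compare with t1
    have hsub : (Finset.univ.filter fun i : Fin n =>
          |y i - dotp (x i) (βt t2)| ≤ |t2 - dotp xnew (βt t2)|) ⊆
        (Finset.univ.filter fun i : Fin n =>
          |y i - dotp (x i) (βt t1)| ≤ |t1 - dotp xnew (βt t1)|) := by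
      intro i hi
      rw [Finset.mem_filter] at hi ⊢
      refine ⟨Finset.mem_univ i, ?_⟩
      have hri := hi.2
      rw [abs_of_nonpos hsign] at hri
      obtain ⟨hl, hr⟩ := abs_le.mp hri
      have hF1 : (t1 - dotp xnew (βt t1)) + 1 * (y i - dotp (x i) (βt t1))
          ≤ (t2 - dotp xnew (βt t2)) + 1 * (y i - dotp (x i) (βt t2)) := by
        simpa using hFmono 1 (Or.inl rfl) i ht2.1
      have hFm : (t1 - dotp xnew (βt t1)) + (-1) * (y i - dotp (x i) (βt t1))
          ≤ (t2 - dotp xnew (βt t2)) + (-1) * (y i - dotp (x i) (βt t2)) := by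
        simpa using hFmono (-1) (Or.inr rfl) i ht2.1
      have hna : -(t1 - dotp xnew (βt t1)) ≤ |t1 - dotp xnew (βt t1)| :=
        neg_le_abs _
      rw [abs_le]
      constructor <;> linarith
    have hcard := Finset.card_le_card hsub
    refine le_trans ht1 ?_
    unfold pvalConf
    gcongr
  · -- compare with t3
    have hsub : (Finset.univ.filter fun i : Fin n =>
          |y i - dotp (x i) (βt t2)| ≤ |t2 - dotp xnew (βt t2)|) ⊆
        (Finset.univ.filter fun i : Fin n =>
          |y i - dotp (x i) (βt t3)| ≤ |t3 - dotp xnew (βt t3)|) := by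
      intro i hi
      rw [Finset.mem_filter] at hi ⊢
      refine ⟨Finset.mem_univ i, ?_⟩
      have hri := hi.2
      rw [abs_of_nonneg hsign] at hri
      obtain ⟨hl, hr⟩ := abs_le.mp hri
      have hF1 : (t2 - dotp xnew (βt t2)) + 1 * (y i - dotp (x i) (βt t2))
          ≤ (t3 - dotp xnew (βt t3)) + 1 * (y i - dotp (x i) (βt t3)) := by
        simpa using hFmono 1 (Or.inl rfl) i ht2.2
      have hFm : (t2 - dotp xnew (βt t2)) + (-1) * (y i - dotp (x i) (βt t2))
          ≤ (t3 - dotp xnew (βt t3)) + (-1) * (y i - dotp (x i) (βt t3)) := by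
        simpa using hFmono (-1) (Or.inr rfl) i ht2.2
      have hna : (t3 - dotp xnew (βt t3)) ≤ |t3 - dotp xnew (βt t3)| :=
        le_abs_self _
      rw [abs_le]
      constructor <;> linarith
    have hcard := Finset.card_le_card hsub
    refine le_trans ht3 ?_
    unfold pvalConf
    gcongr
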